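/- Let U and V be nonempty connected open subsets of ℂ, let φ : U → ℂ be holomorphic and nonconstant with φ(U) ⊆ V, and let (f_j)_{j∈ι} be a family of holomorphic functions V → ℂ that is linearly independent over ℂ. Then the family of composites (f_j ∘ φ)_{j∈ι}, as functions U → ℂ, is linearly independent over ℂ. -/

import Mathlib

/-- Precomposition with a nonconstant holomorphic map between nonempty
connected open subsets of ℂ preserves linear independence of families of holomorphic
functions. -/
theorem stmt_5 {ι : Type*} (U V : Set ℂ)
    (hUo : IsOpen U) (hUc : IsConnected U)
    (hVo : IsOpen V) (hVc : IsConnected V)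
    (φ : ℂ → ℂ) (hφ : AnalyticOn ℂ φ U) (hφUV : Set.MapsTo φ U V)
    (hφnc : ¬ ∃ c : ℂ, ∀ z ∈ U, φ z = c)
    (f : ι → ℂ → ℂ) (hf : ∀ j, AnalyticOn ℂ (f j) V)
    (hli : LinearIndependent ℂ fun j => V.restrict (f j)) :
    LinearIndependent ℂ fun j => U.restrict (f j ∘ φ) := by
  have hφ' : AnalyticOnNhd ℂ φ U := (hUo.analyticOn_iff_analyticOnNhd).1 hφ
  have hopen : IsOpen (φ '' U) := by
    rcases hφ'.is_constant_or_isOpen hUc.isPreconnected with h | h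
    · exact absurd h hφnc
    · exact h U le_rfl hUo
  obtain ⟨u₀, hu₀⟩ := hUc.nonempty
  rw [linearIndependent_iff'] at hli ⊢
  intro s c hc j hj
  apply hli s c _ j hj
  set g : ℂ → ℂ := fun z => ∑ i ∈ s, c i • f i z with hg
  have hgU : ∀ z ∈ φ '' U, g z = 0 := by
    rintro z ⟨w, hw, rfl⟩
    have := congrFun hc ⟨w, hw⟩
    simpa [g, Finset.sum_apply, Set.restrict, Set.domRestrict_apply, Function.comp_apply] using this
  have hgV : AnalyticOnNhd ℂ g V := by
    rw [show g = ∑ i ∈ s, (fun z => c i • f i z) from by ext z; simp [g, Finset.sum_apply]]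
    apply Finset.analyticOnNhd_sum
    intro i _
    exact fun z hz => (analyticAt_const (v := c i)).smul ((hVo.analyticOn_iff_analyticOnNhd).1 (hf i) z hz)
  have hev : g =ᶠ[nhds (φ u₀)] 0 :=
    Filter.eventuallyEq_of_mem (hopen.mem_nhds ⟨u₀, hu₀, rfl⟩) hgU
  have hEq : Set.EqOn g 0 V :=
    hgV.eqOn_zero_of_preconnected_of_eventuallyEq_zero hVc.isPreconnected
      (hφUV hu₀) hev
  funext z
  have := hEq z.2
  simpa [g, Finset.sum_apply, Set.restrict, Set.domRestrict_apply] using this
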